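/- Let A be a finite-dimensional involutory Hopf algebra over ℂ with n = dim_ℂ A, let Λ ∈ A be the cotrace element, and let A_op : A⊗A⊗A⊗A → A⊗A⊗A⊗A be the star operator A_op(x₁ ⊗ x₂ ⊗ x₃ ⊗ x₄) = ∑ Λ₍₁₎x₁ ⊗ Λ₍₂₎x₂ ⊗ Λ₍₃₎x₃ ⊗ Λ₍₄₎x₄, where ∑ Λ₍₁₎ ⊗ Λ₍₂₎ ⊗ Λ₍₃₎ ⊗ Λ₍₄₎ = (Δ ⊗ id ⊗ id)((Δ ⊗ id)(Δ Λ)). Then for every integer k ≥ 1, A_opᵏ = n^{k−1}·A_op; in particular A_op ∘ A_op = n·A_op. -/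

import Mathlib

/-!
STATEMENT 6: For a finite-dimensional involutory Hopf algebra A over ℂ with n = dim_ℂ A,
the star operator A_op on A⊗A⊗A⊗A,
  A_op(x₁ ⊗ x₂ ⊗ x₃ ⊗ x₄) = ∑ Λ₍₁₎x₁ ⊗ Λ₍₂₎x₂ ⊗ Λ₍₃₎x₃ ⊗ Λ₍₄₎x₄,
where Λ is the cotrace element, satisfies A_opᵏ = n^{k−1}·A_op for every k ≥ 1;
in particular A_op ∘ A_op = n·A_op.
-/

open HopfAlgebra TensorProduct

noncomputable section

variable (A : Type*) [Ring A] [HopfAlgebra ℂ A]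

/-- The fourfold tensor product A⊗A⊗A⊗A (an algebra). -/
abbrev T4 := A ⊗[ℂ] (A ⊗[ℂ] (A ⊗[ℂ] A))

/-- The cotrace element `Λ = ∑ᵢ (eⁱ ⊗ id)(Δ eᵢ)` associated to a basis `b`. -/
def cotraceElem {ι : Type*} [Fintype ι] (b : Module.Basis ι ℂ A) : A :=
  ∑ i, (TensorProduct.lid ℂ A)
    ((LinearMap.rTensor A (b.coord i)) (Coalgebra.comul (R := ℂ) (b i)))

/-- The threefold comultiplication ∑ Λ₍₁₎ ⊗ Λ₍₂₎ ⊗ Λ₍₃₎ ⊗ Λ₍₄₎ of the cotrace element. -/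
def cotraceLegs {ι : Type*} [Fintype ι] (b : Module.Basis ι ℂ A) : T4 A :=
  (LinearMap.lTensor A (LinearMap.lTensor A (Coalgebra.comul (R := ℂ))))
    ((LinearMap.lTensor A (Coalgebra.comul (R := ℂ)))
      (Coalgebra.comul (R := ℂ) (cotraceElem A b)))

/-- The star operator: componentwise left multiplication by
∑ Λ₍₁₎ ⊗ Λ₍₂₎ ⊗ Λ₍₃₎ ⊗ Λ₍₄₎. -/
def starOp {ι : Type*} [Fintype ι] (b : Module.Basis ι ℂ A) : T4 A →ₗ[ℂ] T4 A :=
  LinearMap.mulLeft ℂ (cotraceLegs A b)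

/-! ### Auxiliary material -/

section Aux

open Coalgebra

variable {A : Type*} [Ring A] [HopfAlgebra ℂ A]

local notation "S" => HopfAlgebra.antipode (R := ℂ)
local notation "ε" => Coalgebra.counit (R := ℂ)
local notation "Δ" => Coalgebra.comul (R := ℂ)

lemma sum_counit_smul {κ : Type*} {a : A} (r : Coalgebra.Repr ℂ a κ) :
    ∑ i ∈ r.index, ε (r.left i) • r.right i = a := by
  have h := congrArg (TensorProduct.lid ℂ A) (Coalgebra.sum_counit_tmul_eq r)
  rw [map_sum] at h
  simp only [TensorProduct.lid_tmul] at h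
  simpa using h

lemma sum_smul_counit {κ : Type*} {a : A} (r : Coalgebra.Repr ℂ a κ) :
    ∑ i ∈ r.index, ε (r.right i) • r.left i = a := by
  have h := congrArg (TensorProduct.rid ℂ A) (Coalgebra.sum_tmul_counit_eq r)
  rw [map_sum] at h
  simp only [TensorProduct.rid_tmul] at h
  simpa using h

/-- key0: ∑ S(a₁)a₂ ⊗ a₃ = 1 ⊗ a. -/
lemma key0' {κ κ' : Type*} {a : A} (r : Coalgebra.Repr ℂ a κ) (r2 : ∀ i : κ, Coalgebra.Repr ℂ (r.right i) κ') :
    ∑ i ∈ r.index, ∑ j ∈ (r2 i).index,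
      (S (r.left i) * (r2 i).left j) ⊗ₜ[ℂ] (r2 i).right j = (1 : A) ⊗ₜ[ℂ] a := by
  classical
  have h := Coalgebra.sum_map_tmul_tmul_eq (R := ℂ)
    (HopfAlgebra.antipode (R := ℂ)) (LinearMap.id (R := ℂ) (M := A)) (LinearMap.id (R := ℂ) (M := A))
    a (repr := r) (a₁ := fun i => ℛ ℂ (r.left i)) (a₂ := r2)
  -- apply N : A⊗(A⊗A) → A⊗A, u⊗(v⊗w) ↦ (u*v)⊗w
  set N : A ⊗[ℂ] (A ⊗[ℂ] A) →ₗ[ℂ] A ⊗[ℂ] A :=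
    (LinearMap.rTensor A (LinearMap.mul' ℂ A)) ∘ₗ
      (TensorProduct.assoc ℂ A A A).symm.toLinearMap with hN
  have h2 := congrArg N h
  simp only [map_sum, hN, LinearMap.coe_comp, Function.comp_apply, LinearEquiv.coe_coe,
    TensorProduct.assoc_symm_tmul, LinearMap.rTensor_tmul, LinearMap.mul'_apply,
    LinearMap.id_coe, id_eq] at h2
  rw [h2]
  have : ∀ i ∈ r.index, ∑ j ∈ (ℛ ℂ (r.left i)).index,
      (S ((ℛ ℂ (r.left i)).left j) * (ℛ ℂ (r.left i)).right j) ⊗ₜ[ℂ] r.right i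
      = (1:A) ⊗ₜ[ℂ] (ε (r.left i) • r.right i) := by
    intro i _
    rw [← TensorProduct.sum_tmul, HopfAlgebra.sum_antipode_mul_eq_smul]
    rw [TensorProduct.smul_tmul]
  rw [Finset.sum_congr rfl this, ← TensorProduct.tmul_sum, _root_.sum_counit_smul]

/-- A representation of `comul (a*b)` from representations of `comul a`, `comul b`. -/
def prodRepr {κ κ' : Type*} {a b : A} (ra : Coalgebra.Repr ℂ a κ) (rb : Coalgebra.Repr ℂ b κ') :
    Coalgebra.Repr ℂ (a * b) (κ × κ') where
  index := ra.index ×ˢ rb.index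
  left p := ra.left p.1 * rb.left p.2
  right p := ra.right p.1 * rb.right p.2
  eq := by
    rw [Bialgebra.comul_mul, ← ra.eq, ← rb.eq, Finset.sum_mul_sum, ← Finset.sum_product']
    simp [Algebra.TensorProduct.tmul_mul_tmul]

lemma sum_mul_antipode_prod {κ κ' : Type*} {a b : A} (ra : Coalgebra.Repr ℂ a κ) (rb : Coalgebra.Repr ℂ b κ') :
    ∑ i ∈ ra.index, ∑ j ∈ rb.index,
      (ra.left i * rb.left j) * S (ra.right i * rb.right j) = (ε a * ε b) • (1 : A) := by
  have h := HopfAlgebra.sum_mul_antipode_eq_smul (prodRepr ra rb)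
  simp only [prodRepr, Finset.sum_product, Bialgebra.counit_mul] at h
  exact h

lemma antipode_one' : S (1 : A) = 1 := by
  have h := HopfAlgebra.sum_mul_antipode_eq_smul (R := ℂ) (A := A) (a := 1)
    ⟨({0} : Finset ℕ), fun _ => 1, fun _ => 1, by
      rw [Bialgebra.comul_one]; simp [Algebra.TensorProduct.one_def]⟩
  simpa using h

lemma antipode_mul' (a b : A) : S (a * b) = S b * S a := by
  classical
  set ra := ℛ ℂ a
  set rb := ℛ ℂ b
  set r2 : ∀ i : A × A, Coalgebra.Repr ℂ (ra.right i) (A × A) := fun i => ℛ ℂ (ra.right i)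
  set s2 : ∀ k : A × A, Coalgebra.Repr ℂ (rb.right k) (A × A) := fun k => ℛ ℂ (rb.right k)
  set X : A := ∑ k ∈ rb.index, ∑ l ∈ (s2 k).index, ∑ i ∈ ra.index, ∑ j ∈ (r2 i).index,
    (S (rb.left k) * S (ra.left i)) *
      (((r2 i).left j * (s2 k).left l) * S ((r2 i).right j * (s2 k).right l)) with hX
  have hX1 : X = S (a * b) := by
    have inner : ∀ k ∈ rb.index, ∀ l ∈ (s2 k).index,
        ∑ i ∈ ra.index, ∑ j ∈ (r2 i).index,
          (S (rb.left k) * S (ra.left i)) *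
            (((r2 i).left j * (s2 k).left l) * S ((r2 i).right j * (s2 k).right l))
        = (S (rb.left k) * (s2 k).left l) * S (a * (s2 k).right l) := by
      intro k _ l _
      set L : A →ₗ[ℂ] A →ₗ[ℂ] A := LinearMap.mk₂ ℂ
        (fun u v => (S (rb.left k) * (u * (s2 k).left l)) * S (v * (s2 k).right l))
        (by intros; simp [add_mul, mul_add])
        (by intros; simp [smul_mul_assoc, mul_smul_comm])
        (by intros; simp [add_mul, mul_add])
        (by intros; simp [smul_mul_assoc, mul_smul_comm]) with hL
      have happ := congrArg (TensorProduct.lift L) (key0' ra r2)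
      rw [map_sum] at happ
      simp only [map_sum] at happ
      simp only [TensorProduct.lift.tmul, hL, LinearMap.mk₂_apply] at happ
      calc ∑ i ∈ ra.index, ∑ j ∈ (r2 i).index,
            (S (rb.left k) * S (ra.left i)) *
              (((r2 i).left j * (s2 k).left l) * S ((r2 i).right j * (s2 k).right l))
          = ∑ i ∈ ra.index, ∑ j ∈ (r2 i).index,
            (S (rb.left k) * ((S (ra.left i) * (r2 i).left j) * (s2 k).left l)) *
              S ((r2 i).right j * (s2 k).right l) := by
            apply Finset.sum_congr rfl; intro i _; apply Finset.sum_congr rfl; intro j _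
            simp [mul_assoc]
        _ = (S (rb.left k) * (1 * (s2 k).left l)) * S (a * (s2 k).right l) := happ
        _ = (S (rb.left k) * (s2 k).left l) * S (a * (s2 k).right l) := by rw [one_mul]
    rw [hX, Finset.sum_congr rfl (fun k hk => Finset.sum_congr rfl (fun l hl => inner k hk l hl))]
    set L' : A →ₗ[ℂ] A →ₗ[ℂ] A := LinearMap.mk₂ ℂ
      (fun u v => u * S (a * v))
      (by intros; simp [add_mul])
      (by intros; simp [smul_mul_assoc])
      (by intros; simp [mul_add])
      (by intros; simp [mul_smul_comm]) with hL'
    have happ := congrArg (TensorProduct.lift L') (key0' rb s2)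
    rw [map_sum] at happ
    simp only [map_sum] at happ
    simp only [TensorProduct.lift.tmul, hL', LinearMap.mk₂_apply] at happ
    calc ∑ k ∈ rb.index, ∑ l ∈ (s2 k).index,
          (S (rb.left k) * (s2 k).left l) * S (a * (s2 k).right l) = 1 * S (a * b) := happ
      _ = S (a * b) := one_mul _
  have hX2 : X = S b * S a := by
    rw [hX]
    have swap1 : ∀ k ∈ rb.index,
        ∑ l ∈ (s2 k).index, ∑ i ∈ ra.index, ∑ j ∈ (r2 i).index,
          (S (rb.left k) * S (ra.left i)) *
            (((r2 i).left j * (s2 k).left l) * S ((r2 i).right j * (s2 k).right l))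
        = ∑ i ∈ ra.index, (ε (ra.right i) * ε (rb.right k)) • (S (rb.left k) * S (ra.left i)) := by
      intro k _
      rw [Finset.sum_comm]
      apply Finset.sum_congr rfl; intro i _
      rw [Finset.sum_comm]
      simp only [← Finset.mul_sum]
      rw [sum_mul_antipode_prod (r2 i) (s2 k), mul_smul_comm, mul_one]
    rw [Finset.sum_congr rfl swap1]
    have hb : (S (b : A) : A) = ∑ k ∈ rb.index, ε (rb.right k) • S (rb.left k) := by
      conv_lhs => rw [← sum_smul_counit rb]
      rw [map_sum]; simp only [map_smul]
    have ha : (S (a : A) : A) = ∑ i ∈ ra.index, ε (ra.right i) • S (ra.left i) := by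
      conv_lhs => rw [← sum_smul_counit ra]
      rw [map_sum]; simp only [map_smul]
    rw [hb, ha, Finset.sum_mul_sum]
    apply Finset.sum_congr rfl; intro k _
    apply Finset.sum_congr rfl; intro i _
    rw [smul_mul_assoc, mul_smul_comm, smul_smul, mul_comm (ε (rb.right k))]
  rw [← hX1, hX2]

lemma sum_right_mul_antipode (hinv : ∀ x : A, S (S x) = x) {κ : Type*} {a : A} (r : Coalgebra.Repr ℂ a κ) :
    ∑ i ∈ r.index, r.right i * S (r.left i) = ε a • (1 : A) := by
  have h : ∀ i ∈ r.index, r.right i * S (r.left i) = S (r.left i * S (r.right i)) := by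
    intro i _
    rw [antipode_mul', hinv]
  rw [Finset.sum_congr rfl h, ← map_sum, HopfAlgebra.sum_mul_antipode_eq_smul r,
    map_smul, antipode_one']

lemma rT_mulLeft (c : A) (t : A ⊗[ℂ] A) :
    LinearMap.rTensor A (LinearMap.mulLeft ℂ c) t = (c ⊗ₜ[ℂ] (1:A)) * t := by
  induction t with
  | zero => simp
  | tmul x y => simp [Algebra.TensorProduct.tmul_mul_tmul]
  | add x y hx hy => simp [mul_add, hx, hy]

lemma lT_mulLeft (c : A) (t : A ⊗[ℂ] A) :
    LinearMap.lTensor A (LinearMap.mulLeft ℂ c) t = ((1:A) ⊗ₜ[ℂ] c) * t := by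
  induction t with
  | zero => simp
  | tmul x y => simp [Algebra.TensorProduct.tmul_mul_tmul]
  | add x y hx hy => simp [mul_add, hx, hy]

/-- key0 in compact form: ∑ (S a₁ ⊗ 1) * Δ a₂ = 1 ⊗ a. -/
lemma key0c {κ : Type*} {a : A} (r : Coalgebra.Repr ℂ a κ) :
    ∑ i ∈ r.index, ((S (r.left i)) ⊗ₜ[ℂ] (1:A)) * Δ (r.right i) = (1:A) ⊗ₜ[ℂ] a := by
  classical
  have h := key0' r (fun i => ℛ ℂ (r.right i))
  rw [← h]
  apply Finset.sum_congr rfl; intro i _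
  conv_lhs => rw [← (ℛ ℂ (r.right i)).eq]
  rw [Finset.mul_sum]
  apply Finset.sum_congr rfl; intro j _
  rw [Algebra.TensorProduct.tmul_mul_tmul, one_mul]

/-- The Hopf identity: x₁ ⊗ a x₂ = ∑ S(a₁) (a₂ x)₁ ⊗ (a₂ x)₂. -/
lemma key1 {κ : Type*} (a : A) (r : Coalgebra.Repr ℂ a κ) :
    LinearMap.lTensor A (LinearMap.mulLeft ℂ a) ∘ₗ Δ
      = ∑ i ∈ r.index, LinearMap.rTensor A (LinearMap.mulLeft ℂ (S (r.left i))) ∘ₗ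
          (Δ ∘ₗ LinearMap.mulLeft ℂ (r.right i)) := by
  apply LinearMap.ext; intro x
  rw [LinearMap.sum_apply]
  simp only [LinearMap.comp_apply, LinearMap.mulLeft_apply]
  rw [lT_mulLeft]
  have : ∀ i ∈ r.index,
      LinearMap.rTensor A (LinearMap.mulLeft ℂ (S (r.left i))) (Δ (r.right i * x))
      = ((S (r.left i) ⊗ₜ[ℂ] (1:A)) * Δ (r.right i)) * Δ x := by
    intro i _
    rw [rT_mulLeft, Bialgebra.comul_mul, mul_assoc]
  rw [Finset.sum_congr rfl this, ← Finset.sum_mul, key0c r]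

variable {ι : Type*} [Fintype ι] (b : Module.Basis ι ℂ A)

/-- Partial trace in the first leg. -/
def Tr2 (P : A →ₗ[ℂ] A ⊗[ℂ] A) : A :=
  ∑ i, TensorProduct.lid ℂ A (LinearMap.rTensor A (b.coord i) (P (b i)))

lemma rTensor_sum {κ : Type*} (σ : Finset κ) (F : κ → (A →ₗ[ℂ] ℂ)) (t : A ⊗[ℂ] A) :
    LinearMap.rTensor A (∑ i ∈ σ, F i) t = ∑ i ∈ σ, LinearMap.rTensor A (F i) t := by
  induction t with
  | zero => simp
  | tmul x y => simp [LinearMap.sum_apply, TensorProduct.sum_tmul]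
  | add x y hx hy => rw [map_add, hx, hy, ← Finset.sum_add_distrib]; simp

/-- Cyclicity of the partial trace. -/
lemma Tr2_cyc (P : A →ₗ[ℂ] A ⊗[ℂ] A) (g : A →ₗ[ℂ] A) :
    Tr2 b (P ∘ₗ g) = Tr2 b (LinearMap.rTensor A g ∘ₗ P) := by
  classical
  unfold Tr2
  have hg : ∀ i, P (g (b i)) = ∑ j, b.repr (g (b i)) j • P (b j) := by
    intro i
    conv_lhs => rw [← b.sum_repr (g (b i))]
    rw [map_sum]
    simp [map_smul]
  have lhs : ∀ i : ι, TensorProduct.lid ℂ A (LinearMap.rTensor A (b.coord i) ((P ∘ₗ g) (b i)))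
      = ∑ j, b.repr (g (b i)) j •
          TensorProduct.lid ℂ A (LinearMap.rTensor A (b.coord i) (P (b j))) := by
    intro i
    rw [LinearMap.comp_apply, hg i, map_sum, map_sum]
    simp [map_smul]
  have rhs : ∀ j : ι, TensorProduct.lid ℂ A
        (LinearMap.rTensor A (b.coord j) ((LinearMap.rTensor A g ∘ₗ P) (b j)))
      = ∑ i, b.repr (g (b i)) j •
          TensorProduct.lid ℂ A (LinearMap.rTensor A (b.coord i) (P (b j))) := by
    intro j
    rw [LinearMap.comp_apply, ← LinearMap.comp_apply (LinearMap.rTensor A (b.coord j)),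
      ← LinearMap.rTensor_comp]
    have hco : b.coord j ∘ₗ g = ∑ i, b.repr (g (b i)) j • b.coord i := by
      apply b.ext; intro k
      simp [Module.Basis.coord_apply, Finset.sum_apply, LinearMap.sum_apply,
        Finsupp.single_apply, Finset.sum_ite_eq', mul_ite]
    rw [hco, rTensor_sum, map_sum]
    apply Finset.sum_congr rfl; intro i _
    rw [LinearMap.rTensor_smul, LinearMap.smul_apply, map_smul]
  rw [Finset.sum_congr rfl (fun i _ => lhs i), Finset.sum_congr rfl (fun j _ => rhs j),
    Finset.sum_comm]

lemma Tr2_comp_sum {κ : Type*} (σ : Finset κ) (F : κ → (A →ₗ[ℂ] A ⊗[ℂ] A)) :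
    Tr2 b (∑ i ∈ σ, F i) = ∑ i ∈ σ, Tr2 b (F i) := by
  unfold Tr2
  rw [Finset.sum_comm]
  apply Finset.sum_congr rfl; intro i _
  rw [LinearMap.sum_apply, map_sum, map_sum]

lemma mul_lid (a : A) (f : A →ₗ[ℂ] ℂ) (t : A ⊗[ℂ] A) :
    a * TensorProduct.lid ℂ A (LinearMap.rTensor A f t)
      = TensorProduct.lid ℂ A (LinearMap.rTensor A f
          (LinearMap.lTensor A (LinearMap.mulLeft ℂ a) t)) := by
  induction t with
  | zero => simp
  | tmul x y => simp [mul_smul_comm]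
  | add x y hx hy => simp only [map_add, mul_add, hx, hy]

/-- The cotrace element is a left integral. -/
lemma mul_cotrace (hinv : ∀ x : A, S (S x) = x) (a : A) :
    a * Tr2 b Δ = ε a • Tr2 b Δ := by
  classical
  set r := ℛ ℂ a
  have h1 : a * Tr2 b Δ = Tr2 b (LinearMap.lTensor A (LinearMap.mulLeft ℂ a) ∘ₗ Δ) := by
    unfold Tr2
    rw [Finset.mul_sum]
    exact Finset.sum_congr rfl fun i _ => mul_lid a (b.coord i) (Δ (b i))
  rw [h1, key1 a r, Tr2_comp_sum]
  have h2 : ∀ i ∈ r.index,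
      Tr2 b (LinearMap.rTensor A (LinearMap.mulLeft ℂ (S (r.left i))) ∘ₗ
        (Δ ∘ₗ LinearMap.mulLeft ℂ (r.right i)))
      = Tr2 b (Δ ∘ₗ LinearMap.mulLeft ℂ (r.right i * S (r.left i))) := by
    intro i _
    rw [← Tr2_cyc b (Δ ∘ₗ LinearMap.mulLeft ℂ (r.right i)) (LinearMap.mulLeft ℂ (S (r.left i)))]
    rw [LinearMap.comp_assoc, ← LinearMap.mulLeft_mul]
  rw [Finset.sum_congr rfl h2, ← Tr2_comp_sum]
  have h3 : ∑ i ∈ r.index, Δ ∘ₗ LinearMap.mulLeft ℂ (r.right i * S (r.left i))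
      = ε a • (Δ : A →ₗ[ℂ] A ⊗[ℂ] A) := by
    have : ∑ i ∈ r.index, LinearMap.mulLeft ℂ (r.right i * S (r.left i))
        = ε a • (LinearMap.id : A →ₗ[ℂ] A) := by
      apply LinearMap.ext; intro x
      rw [LinearMap.sum_apply]
      simp only [LinearMap.mulLeft_apply]
      rw [← Finset.sum_mul, sum_right_mul_antipode hinv r, smul_mul_assoc, one_mul]
      simp
    calc ∑ i ∈ r.index, Δ ∘ₗ LinearMap.mulLeft ℂ (r.right i * S (r.left i))
        = Δ ∘ₗ ∑ i ∈ r.index, LinearMap.mulLeft ℂ (r.right i * S (r.left i)) := by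
          ext x; simp [LinearMap.sum_apply]
      _ = Δ ∘ₗ (ε a • (LinearMap.id : A →ₗ[ℂ] A)) := by rw [this]
      _ = ε a • (Δ : A →ₗ[ℂ] A ⊗[ℂ] A) := by ext x; simp
  rw [h3]
  unfold Tr2
  rw [Finset.smul_sum]
  apply Finset.sum_congr rfl; intro i _
  rw [LinearMap.smul_apply, map_smul, map_smul]

/-- ε(Λ) = card ι. -/
lemma counit_cotrace : ε (Tr2 b Δ) = (Fintype.card ι : ℂ) := by
  have key : ∀ (f : A →ₗ[ℂ] ℂ) (t : A ⊗[ℂ] A),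
      ε (TensorProduct.lid ℂ A (LinearMap.rTensor A f t))
        = f (TensorProduct.rid ℂ A (LinearMap.lTensor A (ε : A →ₗ[ℂ] ℂ) t)) := by
    intro f t
    induction t with
    | zero => simp
    | tmul x y => simp [mul_comm]
    | add x y hx hy => simp only [map_add, hx, hy]
  unfold Tr2
  rw [map_sum]
  have : ∀ i : ι, ε (TensorProduct.lid ℂ A (LinearMap.rTensor A (b.coord i) (Δ (b i)))) = 1 := by
    intro i
    rw [key, Coalgebra.lTensor_counit_comul]
    simp
  rw [Finset.sum_congr rfl (fun i _ => this i)]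
  simp

/-- The threefold comultiplication as an algebra homomorphism. -/
def legsAlgHom : A →ₐ[ℂ] T4 A :=
  (Algebra.TensorProduct.map (AlgHom.id ℂ A)
      (Algebra.TensorProduct.map (AlgHom.id ℂ A) (Bialgebra.comulAlgHom ℂ A))).comp
    ((Algebra.TensorProduct.map (AlgHom.id ℂ A) (Bialgebra.comulAlgHom ℂ A)).comp
      (Bialgebra.comulAlgHom ℂ A))

lemma lT_comul_eq (z : A ⊗[ℂ] A) :
    LinearMap.lTensor A (Coalgebra.comul (R := ℂ)) z
      = Algebra.TensorProduct.map (AlgHom.id ℂ A) (Bialgebra.comulAlgHom ℂ A) z := by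
  induction z with
  | zero => simp
  | tmul x y => rfl
  | add x y hx hy => simp [hx, hy]

lemma lT_lT_comul_eq (z : A ⊗[ℂ] (A ⊗[ℂ] A)) :
    LinearMap.lTensor A (LinearMap.lTensor A (Coalgebra.comul (R := ℂ))) z
      = Algebra.TensorProduct.map (AlgHom.id ℂ A)
          (Algebra.TensorProduct.map (AlgHom.id ℂ A) (Bialgebra.comulAlgHom ℂ A)) z := by
  induction z with
  | zero => rw [LinearMap.map_zero, map_zero]
  | tmul x y => rw [LinearMap.lTensor_tmul, Algebra.TensorProduct.map_tmul, lT_comul_eq y]; rfl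
  | add x y hx hy => rw [LinearMap.map_add, map_add, hx, hy]

lemma cotraceLegs_eq : cotraceLegs A b = legsAlgHom (cotraceElem A b) := by
  unfold cotraceLegs legsAlgHom
  rw [lT_comul_eq, lT_lT_comul_eq]
  rfl

lemma cotraceElem_eq_Tr2 : cotraceElem A b = Tr2 b Δ := rfl

end Aux

theorem starOp_pow (A : Type*) [Ring A] [HopfAlgebra ℂ A] [FiniteDimensional ℂ A]
    (hinv : ∀ a : A, antipode (R := ℂ) (antipode (R := ℂ) a) = a)
    {ι : Type*} [Fintype ι] (b : Module.Basis ι ℂ A) :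
    (∀ k : ℕ, 1 ≤ k →
      (starOp A b : Module.End ℂ (T4 A)) ^ k =
        ((Module.finrank ℂ A : ℂ) ^ (k - 1)) • starOp A b) ∧
    starOp A b ∘ₗ starOp A b = (Module.finrank ℂ A : ℂ) • starOp A b := by
  set n : ℂ := (Module.finrank ℂ A : ℂ) with hn
  have hcard : n = (Fintype.card ι : ℂ) := by rw [hn, Module.finrank_eq_card_basis b]
  have hΛ : cotraceElem A b * cotraceElem A b = n • cotraceElem A b := by
    rw [cotraceElem_eq_Tr2, mul_cotrace b hinv, counit_cotrace, hcard]
  have hL4 : cotraceLegs A b * cotraceLegs A b = n • cotraceLegs A b := by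
    rw [cotraceLegs_eq, ← map_mul, hΛ, map_smul]
  have hcomp : starOp A b ∘ₗ starOp A b = n • starOp A b := by
    apply LinearMap.ext; intro x
    simp only [LinearMap.comp_apply, starOp, LinearMap.mulLeft_apply, LinearMap.smul_apply]
    rw [← mul_assoc (cotraceLegs A b) (cotraceLegs A b) x, hL4, smul_mul_assoc]
  refine ⟨?_, hcomp⟩
  intro k hk
  induction k, hk using Nat.le_induction with
  | base => simp
  | succ k hk ih =>
    rw [pow_succ, ih]
    have : (starOp A b : Module.End ℂ (T4 A)) * starOp A b = n • starOp A b := hcomp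
    rw [smul_mul_assoc, this, smul_smul, ← pow_succ, Nat.sub_add_cancel hk,
      Nat.add_sub_cancel]

end
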